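/- arXiv:2011.09935 — 2 statements merged into one kernel-verified Lean document; each statement's English description precedes it below -/
import Mathlib

section
/- There exists no orthogonal array OA(96, 11, 2, 4); that is, there is no 96×11 matrix with entries in {0,1} such that in every selection of 4 columns, each of the 16 binary 4-tuples occurs exactly 6 times as a row of the selected 96×4 submatrix. -/
/-- `A` (a multiset of rows, indexed by a finite type `R`, of vectors in `{0,1}^n`) is a
binary orthogonal array of strength `t` and index `lam`: for every selection of `t`
distinct columns, every binary `t`-tuple occurs exactly `lam` times among the rows
restricted to those columns. An `OA(N, n, 2, t)` is such an array with `N` rows and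
index `lam = N / 2 ^ t`. -/
def IsOA {R : Type} [Fintype R] {n : ℕ} (t lam : ℕ) (A : R → Fin n → Fin 2) : Prop :=
  ∀ c : Fin t → Fin n, Function.Injective c → ∀ v : Fin t → Fin 2,
    (Finset.univ.filter fun r => ∀ i, A r (c i) = v i).card = lam

namespace OA96

def ee (x : Fin 2) : ℤ := 1 - 2 * (x : ℤ)

def dd (A : Fin 96 → Fin 11 → Fin 2) (r s : Fin 96) : ℕ :=
  (Finset.univ.filter fun i => A r i ≠ A s i).card

def cc (A : Fin 96 → Fin 11 → Fin 2) (S : Finset (Fin 11)) : ℤ :=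
  ∑ r : Fin 96, ∏ i ∈ S, ee (A r i)

lemma count_aux (A : Fin 96 → Fin 11 → Fin 2) (hA : IsOA 4 6 A) :
    ∀ (k : ℕ) (S : Finset (Fin 11)) (f : Fin 11 → Fin 2), S.card + k = 4 →
      (Finset.univ.filter fun s => ∀ i ∈ S, A s i = f i).card = 6 * 2 ^ k := by
  intro k
  induction k with
  | zero =>
    intro S f hS
    simp only [Nat.add_zero] at hS
    set c : Fin 4 → Fin 11 := fun j => (S.orderIsoOfFin hS j : Fin 11) with hc
    have hinj : Function.Injective c := by
      intro a b hab
      exact (S.orderIsoOfFin hS).injective (Subtype.ext hab)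
    have h6 := hA c hinj (fun j => f (c j))
    rw [pow_zero, mul_one, ← h6]
    congr 1
    apply Finset.filter_congr
    intro s _
    constructor
    · intro h j
      exact h (c j) (S.orderIsoOfFin hS j).2
    · intro h i hi
      obtain ⟨j, hj⟩ : ∃ j, c j = i := ⟨(S.orderIsoOfFin hS).symm ⟨i, hi⟩, by simp only [hc, OrderIso.apply_symm_apply]⟩
      rw [← hj]; exact h j
  | succ k ih =>
    intro S f hS
    have hcard : S.card ≤ 3 := by omega
    obtain ⟨j, hj⟩ : ∃ j, j ∉ S := by
      by_contra h
      push_neg at h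
      have : S = Finset.univ := Finset.eq_univ_iff_forall.2 h
      rw [this] at hcard
      simp [Finset.card_univ] at hcard
    have hsplit := Finset.card_filter_add_card_filter_not
      (s := Finset.univ.filter fun s => ∀ i ∈ S, A s i = f i) (p := fun s => A s j = 0)
    rw [Finset.filter_filter, Finset.filter_filter] at hsplit
    have e0 : (Finset.univ.filter fun s => (∀ i ∈ S, A s i = f i) ∧ A s j = 0).card
        = 6 * 2 ^ k := by
      have := ih (insert j S) (Function.update f j 0)
        (by rw [Finset.card_insert_of_notMem hj]; omega)
      rw [← this]
      congr 1
      apply Finset.filter_congr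
      intro s _
      simp only [Finset.mem_insert]
      constructor
      · rintro ⟨h1, h2⟩ i hi
        rcases hi with rfl | hi
        · rw [Function.update_self]; exact h2
        · rw [Function.update_of_ne (by rintro rfl; exact hj hi)]; exact h1 i hi
      · intro h
        refine ⟨fun i hi => ?_, ?_⟩
        · have := h i (Or.inr hi)
          rwa [Function.update_of_ne (by rintro rfl; exact hj hi)] at this
        · have := h j (Or.inl rfl)
          rwa [Function.update_self] at this
    have e1 : (Finset.univ.filter fun s => (∀ i ∈ S, A s i = f i) ∧ ¬(A s j = 0)).card
        = 6 * 2 ^ k := by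
      have := ih (insert j S) (Function.update f j 1)
        (by rw [Finset.card_insert_of_notMem hj]; omega)
      rw [← this]
      congr 1
      apply Finset.filter_congr
      intro s _
      have hf2 : ∀ a : Fin 2, ¬(a = 0) ↔ a = 1 := by decide
      simp only [Finset.mem_insert]
      constructor
      · rintro ⟨h1, h2⟩ i hi
        rcases hi with rfl | hi
        · rw [Function.update_self]; exact (hf2 _).1 h2
        · rw [Function.update_of_ne (by rintro rfl; exact hj hi)]; exact h1 i hi
      · intro h
        refine ⟨fun i hi => ?_, ?_⟩
        · have := h i (Or.inr hi)
          rwa [Function.update_of_ne (by rintro rfl; exact hj hi)] at this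
        · have := h j (Or.inl rfl)
          rw [Function.update_self] at this
          rw [hf2]; exact this
    rw [e0, e1] at hsplit
    rw [← hsplit, pow_succ]
    ring

lemma count_pattern (A : Fin 96 → Fin 11 → Fin 2) (hA : IsOA 4 6 A)
    (S : Finset (Fin 11)) (hS : S.card ≤ 4) (f : Fin 11 → Fin 2) :
    (Finset.univ.filter fun s => ∀ i ∈ S, A s i = f i).card = 6 * 2 ^ (4 - S.card) :=
  count_aux A hA (4 - S.card) S f (by omega)

lemma prod_val_eq_ite (A : Fin 96 → Fin 11 → Fin 2) (r : Fin 96) (T : Finset (Fin 11)) :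
    (∏ i ∈ T, ((A r i : ℕ) : ℤ)) = if (∀ i ∈ T, A r i = 1) then 1 else 0 := by
  split_ifs with h
  · apply Finset.prod_eq_one
    intro i hi
    rw [h i hi]; rfl
  · push_neg at h
    obtain ⟨i, hi, hne⟩ := h
    apply Finset.prod_eq_zero hi
    have h0 : A r i = 0 := by omega
    rw [h0]; rfl

lemma sum_prod_val (A : Fin 96 → Fin 11 → Fin 2) (hA : IsOA 4 6 A)
    (T : Finset (Fin 11)) (hT : T.card ≤ 4) :
    (∑ r : Fin 96, ∏ i ∈ T, ((A r i : ℕ) : ℤ)) = 6 * 2 ^ (4 - T.card) := by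
  rw [Finset.sum_congr rfl (fun r _ => prod_val_eq_ite A r T), Finset.sum_boole,
    count_pattern A hA T hT (fun _ => 1)]
  push_cast
  ring

lemma cc_zero (A : Fin 96 → Fin 11 → Fin 2) (hA : IsOA 4 6 A)
    (S : Finset (Fin 11)) (hne : S.Nonempty) (h4 : S.card ≤ 4) : cc A S = 0 := by
  have expand : ∀ r : Fin 96, (∏ i ∈ S, ee (A r i))
      = ∑ T ∈ S.powerset, (-2 : ℤ) ^ T.card * ∏ i ∈ T, ((A r i : ℕ) : ℤ) := by
    intro r
    have h1 : ∀ i ∈ S, ee (A r i) = (-2) * ((A r i : ℕ) : ℤ) + 1 := by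
      intro i _; unfold ee; ring
    rw [Finset.prod_congr rfl h1, Finset.prod_add]
    apply Finset.sum_congr rfl
    intro T _
    rw [Finset.prod_const_one, mul_one, Finset.prod_mul_distrib, Finset.prod_const]
  unfold cc
  rw [Finset.sum_congr rfl (fun r _ => expand r), Finset.sum_comm]
  have inner : ∀ T ∈ S.powerset,
      (∑ r : Fin 96, (-2 : ℤ) ^ T.card * ∏ i ∈ T, ((A r i : ℕ) : ℤ))
        = 96 * (-1) ^ T.card := by
    intro T hT
    have hTcard : T.card ≤ 4 :=
      le_trans (Finset.card_le_card (Finset.mem_powerset.1 hT)) h4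
    rw [← Finset.mul_sum, sum_prod_val A hA T hTcard]
    have h2 : (2 : ℤ) ^ T.card * 2 ^ (4 - T.card) = 16 := by
      rw [← pow_add, show T.card + (4 - T.card) = 4 by omega]; norm_num
    calc (-2 : ℤ) ^ T.card * (6 * 2 ^ (4 - T.card))
        = (-1) ^ T.card * (2 ^ T.card * 2 ^ (4 - T.card)) * 6 := by rw [neg_pow]; ring
      _ = 96 * (-1) ^ T.card := by rw [h2]; ring
  rw [Finset.sum_congr rfl inner, ← Finset.mul_sum,
    Finset.sum_powerset_neg_one_pow_card_of_nonempty hne, mul_zero]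

lemma dd_le (A : Fin 96 → Fin 11 → Fin 2) (r s : Fin 96) : dd A r s ≤ 11 := by
  unfold dd
  calc (Finset.univ.filter fun i => A r i ≠ A s i).card
      ≤ (Finset.univ : Finset (Fin 11)).card := Finset.card_filter_le _ _
    _ = 11 := by simp

lemma dd_self (A : Fin 96 → Fin 11 → Fin 2) (r : Fin 96) : dd A r r = 0 := by
  unfold dd
  simp

lemma mom_nat (A : Fin 96 → Fin 11 → Fin 2) (hA : IsOA 4 6 A) (r : Fin 96)
    (k : ℕ) (hk : k ≤ 4) :
    (∑ s : Fin 96, (dd A r s).choose k) = Nat.choose 11 k * (6 * 2 ^ (4 - k)) := by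
  have hf2 : ∀ a b : Fin 2, (¬(a = b)) ↔ b = (if a = 0 then 1 else 0) := by decide
  have step1 : ∀ s : Fin 96, (dd A r s).choose k =
      ((Finset.powersetCard k (Finset.univ : Finset (Fin 11))).filter
        (fun T => ∀ i ∈ T, A s i = (if A r i = 0 then 1 else 0))).card := by
    intro s
    unfold dd
    rw [← Finset.card_powersetCard]
    congr 1
    ext T
    simp only [Finset.mem_powersetCard, Finset.mem_filter, Finset.subset_iff,
      Finset.mem_filter, Finset.mem_univ, true_and, Finset.subset_univ]
    constructor
    · rintro ⟨hsub, hcard⟩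
      exact ⟨⟨fun {x} _ => trivial, hcard⟩, fun i hi => (hf2 _ _).1 (hsub hi)⟩
    · rintro ⟨⟨-, hcard⟩, hall⟩
      exact ⟨fun {i} hi => (hf2 _ _).2 (hall i hi), hcard⟩
  rw [Finset.sum_congr rfl (fun s _ => step1 s)]
  simp only [Finset.card_filter]
  rw [Finset.sum_comm]
  have inner : ∀ T ∈ Finset.powersetCard k (Finset.univ : Finset (Fin 11)),
      (∑ s : Fin 96, if (∀ i ∈ T, A s i = (if A r i = 0 then 1 else 0)) then 1 else 0)
        = 6 * 2 ^ (4 - k) := by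
    intro T hT
    have hTc : T.card = k := (Finset.mem_powersetCard.1 hT).2
    rw [← Finset.card_filter, count_pattern A hA T (by omega) _, hTc]
  rw [Finset.sum_congr rfl inner, Finset.sum_const, smul_eq_mul,
    Finset.card_powersetCard, Finset.card_univ, Fintype.card_fin]

lemma ee_sq : ∀ a : Fin 2, ee a * ee a = 1 := by decide

lemma ee_neg : ∀ a b : Fin 2, a ≠ b → ee a * ee b = -1 := by decide

lemma card_eq_part (A : Fin 96 → Fin 11 → Fin 2) (r s : Fin 96) :
    (Finset.univ.filter fun i => A r i = A s i).card = 11 - dd A r s := by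
  have h := Finset.card_filter_add_card_filter_not
    (s := (Finset.univ : Finset (Fin 11))) (p := fun i => A r i = A s i)
  have hd : (Finset.univ.filter fun i => ¬(A r i = A s i)).card = dd A r s := rfl
  rw [Finset.card_univ, Fintype.card_fin] at h
  omega

lemma pair_split (A : Fin 96 → Fin 11 → Fin 2) (r s : Fin 96) (t : ℤ) :
    (∏ i : Fin 11, (1 + t * (ee (A r i) * ee (A s i))))
      = (1 + t) ^ (11 - dd A r s) * (1 - t) ^ (dd A r s) := by
  rw [← Finset.prod_filter_mul_prod_filter_not Finset.univ (fun i => A r i = A s i)]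
  have h1 : ∀ i ∈ Finset.univ.filter (fun i => A r i = A s i),
      (1 + t * (ee (A r i) * ee (A s i))) = 1 + t := by
    intro i hi
    have := (Finset.mem_filter.1 hi).2
    rw [this, ee_sq, mul_one]
  have h2 : ∀ i ∈ Finset.univ.filter (fun i => ¬(A r i = A s i)),
      (1 + t * (ee (A r i) * ee (A s i))) = 1 - t := by
    intro i hi
    have := (Finset.mem_filter.1 hi).2
    rw [ee_neg _ _ this]; ring
  rw [Finset.prod_congr rfl h1, Finset.prod_congr rfl h2, Finset.prod_const,
    Finset.prod_const, card_eq_part]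
  rfl

lemma pair_expand (A : Fin 96 → Fin 11 → Fin 2) (r s : Fin 96) (t : ℤ) :
    (1 + t) ^ (11 - dd A r s) * (1 - t) ^ (dd A r s)
      = ∑ T ∈ (Finset.univ : Finset (Fin 11)).powerset,
          t ^ T.card * ∏ i ∈ T, (ee (A r i) * ee (A s i)) := by
  rw [← pair_split]
  have h1 : ∀ i ∈ (Finset.univ : Finset (Fin 11)),
      (1 + t * (ee (A r i) * ee (A s i))) = t * (ee (A r i) * ee (A s i)) + 1 := by
    intro i _; ring
  rw [Finset.prod_congr rfl h1, Finset.prod_add]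
  apply Finset.sum_congr rfl
  intro T _
  rw [Finset.prod_const_one, mul_one, Finset.prod_mul_distrib, Finset.prod_const]

lemma pair_neg (A : Fin 96 → Fin 11 → Fin 2) (r s : Fin 96) :
    (∏ i : Fin 11, (ee (A r i) * ee (A s i))) = (-1) ^ (dd A r s) := by
  rw [← Finset.prod_filter_mul_prod_filter_not Finset.univ (fun i => A r i = A s i)]
  have h1 : ∀ i ∈ Finset.univ.filter (fun i => A r i = A s i),
      (ee (A r i) * ee (A s i)) = 1 := by
    intro i hi
    have := (Finset.mem_filter.1 hi).2
    rw [this, ee_sq]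
  have h2 : ∀ i ∈ Finset.univ.filter (fun i => ¬(A r i = A s i)),
      (ee (A r i) * ee (A s i)) = -1 := by
    intro i hi
    exact ee_neg _ _ (Finset.mem_filter.1 hi).2
  rw [Finset.prod_congr rfl h1, Finset.prod_congr rfl h2, Finset.prod_const_one,
    Finset.prod_const, one_mul]
  rfl

lemma glob_expand (A : Fin 96 → Fin 11 → Fin 2) (t : ℤ) :
    (∑ r : Fin 96, ∑ s : Fin 96, (1 + t) ^ (11 - dd A r s) * (1 - t) ^ (dd A r s))
      = ∑ T ∈ (Finset.univ : Finset (Fin 11)).powerset, t ^ T.card * (cc A T) ^ 2 := by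
  have h1 : ∀ r s : Fin 96, (1 + t) ^ (11 - dd A r s) * (1 - t) ^ (dd A r s)
      = ∑ T ∈ (Finset.univ : Finset (Fin 11)).powerset,
          t ^ T.card * ((∏ i ∈ T, ee (A r i)) * (∏ i ∈ T, ee (A s i))) := by
    intro r s
    rw [pair_expand]
    exact Finset.sum_congr rfl fun T _ => by rw [Finset.prod_mul_distrib]
  calc (∑ r : Fin 96, ∑ s : Fin 96, (1 + t) ^ (11 - dd A r s) * (1 - t) ^ (dd A r s))
      = ∑ r : Fin 96, ∑ T ∈ (Finset.univ : Finset (Fin 11)).powerset, ∑ s : Fin 96,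
          t ^ T.card * ((∏ i ∈ T, ee (A r i)) * (∏ i ∈ T, ee (A s i))) := by
        apply Finset.sum_congr rfl
        intro r _
        rw [Finset.sum_congr rfl (fun s _ => h1 r s), Finset.sum_comm]
    _ = ∑ T ∈ (Finset.univ : Finset (Fin 11)).powerset, ∑ r : Fin 96, ∑ s : Fin 96,
          t ^ T.card * ((∏ i ∈ T, ee (A r i)) * (∏ i ∈ T, ee (A s i))) := Finset.sum_comm
    _ = ∑ T ∈ (Finset.univ : Finset (Fin 11)).powerset, t ^ T.card * (cc A T) ^ 2 := by
        apply Finset.sum_congr rfl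
        intro T _
        unfold cc
        simp only [sq, Finset.sum_mul_sum, Finset.mul_sum]
        rw [Finset.sum_comm]
        apply Finset.sum_congr rfl
        intro s _
        rw [Finset.sum_mul, Finset.mul_sum]

def Hf (n : ℕ) : ℤ :=
  -1252873216 * 1 ^ n + 1275305472 * (-1 : ℤ) ^ n + 41774880 * 2 ^ n
  - 67062688 * (-2 : ℤ) ^ n - 748032 * 3 ^ n + 3747840 * (-3 : ℤ) ^ n
  - 4807 * 4 ^ n - 139449 * (-4 : ℤ) ^ n

def Phi (w : ℕ) : ℤ :=
  -1252873216 * ((1 + 1 : ℤ) ^ (11 - w) * (1 - 1 : ℤ) ^ w)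
  + 1275305472 * ((1 + (-1) : ℤ) ^ (11 - w) * (1 - (-1) : ℤ) ^ w)
  + 41774880 * ((1 + 2 : ℤ) ^ (11 - w) * (1 - 2 : ℤ) ^ w)
  - 67062688 * ((1 + (-2) : ℤ) ^ (11 - w) * (1 - (-2) : ℤ) ^ w)
  - 748032 * ((1 + 3 : ℤ) ^ (11 - w) * (1 - 3 : ℤ) ^ w)
  + 3747840 * ((1 + (-3) : ℤ) ^ (11 - w) * (1 - (-3) : ℤ) ^ w)
  - 4807 * ((1 + 4 : ℤ) ^ (11 - w) * (1 - 4 : ℤ) ^ w)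
  - 139449 * ((1 + (-4) : ℤ) ^ (11 - w) * (1 - (-4) : ℤ) ^ w)

lemma pair_Phi (A : Fin 96 → Fin 11 → Fin 2) (r s : Fin 96) :
    Phi (dd A r s) = ∑ T ∈ (Finset.univ : Finset (Fin 11)).powerset,
      Hf T.card * ∏ i ∈ T, (ee (A r i) * ee (A s i)) := by
  unfold Phi
  rw [pair_expand A r s 1, pair_expand A r s (-1), pair_expand A r s 2,
    pair_expand A r s (-2), pair_expand A r s 3, pair_expand A r s (-3),
    pair_expand A r s 4, pair_expand A r s (-4)]
  simp only [Finset.mul_sum, ← Finset.sum_add_distrib, ← Finset.sum_sub_distrib]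
  apply Finset.sum_congr rfl
  intro T _
  unfold Hf
  ring

lemma glob_Phi (A : Fin 96 → Fin 11 → Fin 2) :
    (∑ r : Fin 96, ∑ s : Fin 96, Phi (dd A r s))
      = ∑ T ∈ (Finset.univ : Finset (Fin 11)).powerset, Hf T.card * (cc A T) ^ 2 := by
  have h1 : ∀ r s : Fin 96, Phi (dd A r s)
      = ∑ T ∈ (Finset.univ : Finset (Fin 11)).powerset,
          Hf T.card * ((∏ i ∈ T, ee (A r i)) * (∏ i ∈ T, ee (A s i))) := by
    intro r s
    rw [pair_Phi]
    exact Finset.sum_congr rfl fun T _ => by rw [Finset.prod_mul_distrib]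
  calc (∑ r : Fin 96, ∑ s : Fin 96, Phi (dd A r s))
      = ∑ r : Fin 96, ∑ T ∈ (Finset.univ : Finset (Fin 11)).powerset, ∑ s : Fin 96,
          Hf T.card * ((∏ i ∈ T, ee (A r i)) * (∏ i ∈ T, ee (A s i))) := by
        apply Finset.sum_congr rfl
        intro r _
        rw [Finset.sum_congr rfl (fun s _ => h1 r s), Finset.sum_comm]
    _ = ∑ T ∈ (Finset.univ : Finset (Fin 11)).powerset, ∑ r : Fin 96, ∑ s : Fin 96,
          Hf T.card * ((∏ i ∈ T, ee (A r i)) * (∏ i ∈ T, ee (A s i))) := Finset.sum_comm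
    _ = ∑ T ∈ (Finset.univ : Finset (Fin 11)).powerset, Hf T.card * (cc A T) ^ 2 := by
        apply Finset.sum_congr rfl
        intro T _
        unfold cc
        simp only [sq, Finset.sum_mul_sum, Finset.mul_sum]
        rw [Finset.sum_comm]
        apply Finset.sum_congr rfl
        intro s _
        rw [Finset.sum_mul, Finset.mul_sum]

lemma sum_H_split (A : Fin 96 → Fin 11 → Fin 2) (hA : IsOA 4 6 A) :
    (∑ T ∈ (Finset.univ : Finset (Fin 11)).powerset, Hf T.card * (cc A T) ^ 2)
      = 3776532480 * (∑ T ∈ ((Finset.univ : Finset (Fin 11)).powerset.filter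
          (fun T => T.card = 7 ∨ T.card = 8)), (cc A T) ^ 2)
        - 11329597440 * (cc A Finset.univ) ^ 2 := by
  rw [← Finset.sum_filter_add_sum_filter_not
    ((Finset.univ : Finset (Fin 11)).powerset) (fun T => T.card = 7 ∨ T.card = 8)]
  have e1 : (∑ T ∈ ((Finset.univ : Finset (Fin 11)).powerset.filter
      (fun T => T.card = 7 ∨ T.card = 8)), Hf T.card * (cc A T) ^ 2)
      = 3776532480 * (∑ T ∈ ((Finset.univ : Finset (Fin 11)).powerset.filter
          (fun T => T.card = 7 ∨ T.card = 8)), (cc A T) ^ 2) := by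
    rw [Finset.mul_sum]
    apply Finset.sum_congr rfl
    intro T hT
    rcases (Finset.mem_filter.1 hT).2 with h | h <;> rw [h] <;> norm_num [Hf]
  have e2 : (∑ T ∈ (((Finset.univ : Finset (Fin 11)).powerset.filter
      (fun T => ¬(T.card = 7 ∨ T.card = 8)))), Hf T.card * (cc A T) ^ 2)
      = -11329597440 * (cc A Finset.univ) ^ 2 := by
    rw [← Finset.sum_filter_add_sum_filter_not _ (fun T => T = Finset.univ)]
    have hset : (((Finset.univ : Finset (Fin 11)).powerset.filter
        (fun T => ¬(T.card = 7 ∨ T.card = 8))).filter (fun T => T = Finset.univ))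
        = {Finset.univ} := by
      ext T
      simp only [Finset.mem_filter, Finset.mem_powerset, Finset.mem_singleton]
      constructor
      · rintro ⟨-, h⟩; exact h
      · rintro rfl
        refine ⟨⟨Finset.Subset.refl _, ?_⟩, rfl⟩
        rw [Finset.card_univ, Fintype.card_fin]
        omega
    rw [hset, Finset.sum_singleton]
    have hz : (∑ T ∈ (((Finset.univ : Finset (Fin 11)).powerset.filter
        (fun T => ¬(T.card = 7 ∨ T.card = 8))).filter (fun T => ¬(T = Finset.univ))),
        Hf T.card * (cc A T) ^ 2) = 0 := by
      apply Finset.sum_eq_zero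
      intro T hT
      simp only [Finset.mem_filter, Finset.mem_powerset] at hT
      obtain ⟨⟨-, hc78⟩, hne⟩ := hT
      have hle : T.card ≤ 11 := by
        calc T.card ≤ Fintype.card (Fin 11) := Finset.card_le_univ T
          _ = 11 := Fintype.card_fin _
      have hne11 : T.card ≠ 11 := by
        intro h
        exact hne ((Finset.card_eq_iff_eq_univ T).1 (by rw [h, Fintype.card_fin]))
      have h04 : T.card = 0 ∨ T.card = 1 ∨ T.card = 2 ∨ T.card = 3 ∨ T.card = 4
          ∨ T.card = 5 ∨ T.card = 6 ∨ T.card = 9 ∨ T.card = 10 := by omega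
      have hccz : 1 ≤ T.card → T.card ≤ 4 → cc A T = 0 := fun h1 h4 =>
        cc_zero A hA T (Finset.card_pos.1 (by omega)) h4
      rcases h04 with h|h|h|h|h|h|h|h|h
      · rw [h]; norm_num [Hf]
      · rw [hccz (by omega) (by omega)]; ring
      · rw [hccz (by omega) (by omega)]; ring
      · rw [hccz (by omega) (by omega)]; ring
      · rw [hccz (by omega) (by omega)]; ring
      · rw [h]; norm_num [Hf]
      · rw [h]; norm_num [Hf]
      · rw [h]; norm_num [Hf]
      · rw [h]; norm_num [Hf]
    rw [hz, add_zero]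
    rw [Finset.card_univ, Fintype.card_fin]
    norm_num [Hf]
  rw [e1, e2]; ring

def Pol (a0 a1 a2 a3 a4 : ℤ) (w : ℕ) : ℤ :=
  a0 + a1 * (w.choose 1 : ℤ) + a2 * (w.choose 2 : ℤ)
    + a3 * (w.choose 3 : ℤ) + a4 * (w.choose 4 : ℤ)

lemma row_pol (A : Fin 96 → Fin 11 → Fin 2) (hA : IsOA 4 6 A) (r : Fin 96)
    (a0 a1 a2 a3 a4 : ℤ) :
    (∑ s : Fin 96, Pol a0 a1 a2 a3 a4 (dd A r s))
      = 96 * a0 + 528 * a1 + 1320 * a2 + 1980 * a3 + 1980 * a4 := by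
  have mk : ∀ k, k ≤ 4 → (∑ s : Fin 96, ((dd A r s).choose k : ℤ))
      = ((Nat.choose 11 k) * (6 * 2 ^ (4 - k)) : ℕ) := by
    intro k hk
    exact_mod_cast congrArg (Nat.cast : ℕ → ℤ) (mom_nat A hA r k hk)
  unfold Pol
  simp only [Finset.sum_add_distrib, ← Finset.mul_sum, Finset.sum_const,
    Finset.card_univ, Fintype.card_fin, smul_eq_mul]
  rw [mk 1 (by norm_num), mk 2 (by norm_num), mk 3 (by norm_num), mk 4 (by norm_num)]
  push_cast
  norm_num [Nat.choose]
  ring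

def Psi : ℕ → ℤ := Pol 7280068262040 (-4196118664080) 2070870520320 (-790297482240) 178455674880

def Theta : ℕ → ℤ := Pol (-635) 374 (-188) 72 (-16)

def Eta : ℕ → ℤ := Pol 1920 (-975) 414 (-132) 24

lemma Phi_le_Psi : ∀ w, w ≤ 11 → Phi w ≤ Psi w := by
  intro w hw
  interval_cases w <;> norm_num [Phi, Psi, Pol, Nat.choose]

lemma Phi_zero : Psi 0 - Phi 0 = 5800753889280 := by
  norm_num [Phi, Psi, Pol, Nat.choose]

lemma row_Phi (A : Fin 96 → Fin 11 → Fin 2) (hA : IsOA 4 6 A) (r : Fin 96) :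
    (∑ s : Fin 96, Phi (dd A r s)) ≤ -362547118080 := by
  have hnn : ∀ s ∈ (Finset.univ : Finset (Fin 96)), 0 ≤ Psi (dd A r s) - Phi (dd A r s) :=
    fun s _ => sub_nonneg.2 (Phi_le_Psi _ (dd_le A r s))
  have hsingle := Finset.single_le_sum hnn (Finset.mem_univ r)
  rw [dd_self, Phi_zero] at hsingle
  have hsub : (∑ s : Fin 96, (Psi (dd A r s) - Phi (dd A r s)))
      = (∑ s : Fin 96, Psi (dd A r s)) - (∑ s : Fin 96, Phi (dd A r s)) :=
    Finset.sum_sub_distrib _ _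
  have hPsi : (∑ s : Fin 96, Psi (dd A r s)) = 5438206771200 := by
    rw [show Psi = Pol 7280068262040 (-4196118664080) 2070870520320 (-790297482240)
      178455674880 from rfl, row_pol A hA r]
    norm_num
  omega

def eps (A : Fin 96 → Fin 11 → Fin 2) (r : Fin 96) : ℤ := ∏ i : Fin 11, ee (A r i)

lemma cc_univ_eq (A : Fin 96 → Fin 11 → Fin 2) :
    cc A Finset.univ = ∑ r : Fin 96, eps A r := rfl

lemma eps_pm (A : Fin 96 → Fin 11 → Fin 2) (r : Fin 96) :
    eps A r = 1 ∨ eps A r = -1 := by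
  have h1 : eps A r * eps A r = 1 := by
    unfold eps
    rw [← Finset.prod_mul_distrib]
    rw [Finset.prod_congr rfl (fun i _ => ee_sq (A r i))]
    exact Finset.prod_const_one
  rcases Int.eq_one_or_neg_one_of_mul_eq_one' h1 with ⟨h, -⟩ | ⟨h, -⟩
  · exact Or.inl h
  · exact Or.inr h

lemma sign_identity (A : Fin 96 → Fin 11 → Fin 2) (r s : Fin 96) :
    eps A r * eps A s = (-1) ^ (dd A r s) := by
  rw [← pair_neg A r s]
  unfold eps
  rw [Finset.prod_mul_distrib]

lemma Theta_le : ∀ w, w ≤ 11 → Theta w ≤ 5 * (-1 : ℤ) ^ w := by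
  intro w hw
  interval_cases w <;> norm_num [Theta, Pol, Nat.choose]

lemma row_eps (A : Fin 96 → Fin 11 → Fin 2) (hA : IsOA 4 6 A) (r : Fin 96) :
    eps A r * cc A Finset.univ ≥ -25 := by
  have hnn : ∀ s ∈ (Finset.univ : Finset (Fin 96)),
      0 ≤ 5 * (-1 : ℤ) ^ (dd A r s) - Theta (dd A r s) :=
    fun s _ => sub_nonneg.2 (Theta_le _ (dd_le A r s))
  have hsingle := Finset.single_le_sum hnn (Finset.mem_univ r)
  rw [dd_self] at hsingle
  have h640 : 5 * (-1 : ℤ) ^ (0:ℕ) - Theta 0 = 640 := by norm_num [Theta, Pol]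
  rw [h640] at hsingle
  have hsub : (∑ s : Fin 96, (5 * (-1 : ℤ) ^ (dd A r s) - Theta (dd A r s)))
      = (∑ s : Fin 96, 5 * (-1 : ℤ) ^ (dd A r s)) - (∑ s : Fin 96, Theta (dd A r s)) :=
    Finset.sum_sub_distrib _ _
  have hTheta : (∑ s : Fin 96, Theta (dd A r s)) = -768 := by
    rw [show Theta = Pol (-635) 374 (-188) 72 (-16) from rfl, row_pol A hA r]
    norm_num
  have hrw : (∑ s : Fin 96, 5 * (-1 : ℤ) ^ (dd A r s))
      = 5 * (eps A r * cc A Finset.univ) := by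
    rw [← Finset.mul_sum]
    congr 1
    rw [cc_univ_eq, Finset.mul_sum]
    exact Finset.sum_congr rfl fun s _ => (sign_identity A r s).symm
  have : 5 * (eps A r * cc A Finset.univ) ≥ -128 := by omega
  omega

lemma Eta_dvd : ∀ w, w ≤ 11 → Even w → (384 : ℤ) ∣ Eta w := by
  intro w hw hev
  interval_cases w <;>
    first
      | exact absurd hev (by decide)
      | norm_num [Eta, Pol, Nat.choose]

end OA96

theorem no_OA_96_11 : ¬ ∃ A : Fin 96 → Fin 11 → Fin 2, IsOA 4 6 A := by
  rintro ⟨A, hA⟩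
  have hglob : (∑ r : Fin 96, ∑ s : Fin 96, OA96.Phi (OA96.dd A r s))
      ≤ -34804523335680 := by
    calc (∑ r : Fin 96, ∑ s : Fin 96, OA96.Phi (OA96.dd A r s))
        ≤ ∑ _r : Fin 96, (-362547118080 : ℤ) :=
          Finset.sum_le_sum fun r _ => OA96.row_Phi A hA r
      _ = -34804523335680 := by
          rw [Finset.sum_const, Finset.card_univ, Fintype.card_fin]
          norm_num
  have hSQ : (0 : ℤ) ≤ ∑ T ∈ ((Finset.univ : Finset (Fin 11)).powerset.filter
      (fun T => T.card = 7 ∨ T.card = 8)), (OA96.cc A T) ^ 2 :=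
    Finset.sum_nonneg fun T _ => sq_nonneg _
  have hkey : (OA96.cc A Finset.univ) ^ 2 ≥ 3072 := by
    have h1 := OA96.glob_Phi A
    have h2 := OA96.sum_H_split A hA
    rw [h1, h2] at hglob
    nlinarith [hSQ]
  have hrow := OA96.row_eps A hA
  have hall : ∀ r s : Fin 96, OA96.eps A r * OA96.eps A s = 1 := by
    rcases le_or_gt 0 (OA96.cc A Finset.univ) with hpos | hneg
    · have hc56 : OA96.cc A Finset.univ ≥ 56 := by nlinarith
      have heps1 : ∀ r, OA96.eps A r = 1 := by
        intro r
        rcases OA96.eps_pm A r with h | h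
        · exact h
        · exfalso
          have := hrow r
          rw [h] at this
          omega
      intro r s
      rw [heps1 r, heps1 s]; norm_num
    · have hc56 : OA96.cc A Finset.univ ≤ -56 := by nlinarith
      have heps1 : ∀ r, OA96.eps A r = -1 := by
        intro r
        rcases OA96.eps_pm A r with h | h
        · exfalso
          have := hrow r
          rw [h] at this
          omega
        · exact h
      intro r s
      rw [heps1 r, heps1 s]; norm_num
  have heven : ∀ r s : Fin 96, Even (OA96.dd A r s) := by
    intro r s
    have h := OA96.sign_identity A r s
    rw [hall r s] at h
    exact (neg_one_pow_eq_one_iff_even (by norm_num : (-1 : ℤ) ≠ 1)).1 h.symm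
  have hdvd : (384 : ℤ) ∣ ∑ s : Fin 96, OA96.Eta (OA96.dd A 0 s) :=
    Finset.dvd_sum fun s _ => OA96.Eta_dvd _ (OA96.dd_le A 0 s) (heven 0 s)
  have hEta : (∑ s : Fin 96, OA96.Eta (OA96.dd A 0 s)) = 2160 := by
    rw [show OA96.Eta = OA96.Pol 1920 (-975) 414 (-132) 24 from rfl, OA96.row_pol A hA 0]
    norm_num
  rw [hEta] at hdvd
  norm_num at hdvd
end

section
/- There exists no orthogonal array OA(112, 11, 2, 4); that is, there is no 112×11 matrix with entries in {0,1} such that in every selection of 4 columns, each of the 16 binary 4-tuples occurs exactly 7 times as a row of the selected 112×4 submatrix. -/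
namespace NoOA

open Finset

/-- certificate weights -/
def w : ℕ → ℤ
  | 0 => 55
  | 1 => 40
  | 2 => 27
  | 3 => 16
  | 4 => 7
  | 6 => -5
  | 7 => -8
  | 8 => -9
  | 9 => -8
  | 10 => -5
  | _ => 0

/-- the pair polynomial -/
def P (d : ℕ) : ℤ :=
  ∑ u ∈ Finset.range (d + 1), ∑ v ∈ Finset.range (12 - d),
    (-1) ^ u * (d.choose u) * ((11 - d).choose v) * w (u + v)

lemma P_nonneg : ∀ d, d ≤ 11 → 0 ≤ P d := by decide

variable (A : Fin 112 → Fin 11 → Fin 2)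

/-- number of rows which are all ones on `S` (as an integer-valued product sum) -/
def NS (S : Finset (Fin 11)) : ℤ :=
  ∑ r : Fin 112, ∏ i ∈ S, ((A r i : ℕ) : ℤ)

def s (T : Finset (Fin 11)) : ℤ :=
  ∑ r : Fin 112, ∏ i ∈ T, (1 - 2 * ((A r i : ℕ) : ℤ))

lemma NS_eq (hA : IsOA 4 7 A) (S : Finset (Fin 11)) (hS : S.card ≤ 4) :
    NS A S = 7 * 2 ^ (4 - S.card) := by
  classical
  have hprod : ∀ r, (∏ i ∈ S, ((A r i : ℕ) : ℤ)) =
      if ∀ i ∈ S, A r i = 1 then 1 else 0 := by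
    intro r
    have h : ∀ x : Fin 2, ((x : ℕ) : ℤ) = if x = 1 then 1 else 0 := by decide
    rw [Finset.prod_congr rfl fun i _ => h (A r i), Finset.prod_boole]
    simp
  have h1 : NS A S = ((univ.filter fun r => ∀ i ∈ S, A r i = 1).card : ℤ) := by
    unfold NS
    rw [Finset.sum_congr rfl fun r _ => hprod r, Finset.sum_boole]
  -- pick a 4-element superset
  obtain ⟨S', hSS', -, hS'4⟩ :=
    Finset.exists_subsuperset_card_eq (Finset.subset_univ S) hS (by simp)
  set e := S'.orderIsoOfFin hS'4 with he
  set c : Fin 4 → Fin 11 := fun k => (e k : Fin 11) with hc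
  have hc_inj : Function.Injective c := fun x y h => e.injective (Subtype.ext h)
  have hc_mem : ∀ k, c k ∈ S' := fun k => (e k).2
  have hc_surj : ∀ i ∈ S', ∃ k, c k = i := by
    intro i hi
    exact ⟨e.symm ⟨i, hi⟩, by simp [hc]⟩
  set V : Finset (Fin 4 → Fin 2) := univ.filter (fun v => ∀ k, c k ∈ S → v k = 1) with hV
  have hfib : (univ.filter fun r => ∀ i ∈ S, A r i = 1).card
      = ∑ v ∈ V, ((univ.filter fun r => ∀ i ∈ S, A r i = 1).filter
          (fun r => (fun k => A r (c k)) = v)).card := by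
    refine Finset.card_eq_sum_card_fiberwise fun r hr => ?_
    simp only [hV, Finset.mem_coe, mem_filter, mem_univ, true_and] at hr ⊢
    intro k hk
    exact hr _ hk
  have hfil : ∀ v ∈ V, ((univ.filter fun r => ∀ i ∈ S, A r i = 1).filter
      (fun r => (fun k => A r (c k)) = v)) = univ.filter (fun r => ∀ k, A r (c k) = v k) := by
    intro v hv
    simp only [hV, mem_filter, mem_univ, true_and] at hv
    ext r
    simp only [mem_filter, mem_univ, true_and, funext_iff]
    constructor
    · rintro ⟨-, h2⟩; exact h2
    · intro h2
      refine ⟨fun i hi => ?_, h2⟩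
      obtain ⟨k, rfl⟩ := hc_surj i (hSS' hi)
      rw [h2 k, hv k hi]
  have hcount : (univ.filter fun r => ∀ i ∈ S, A r i = 1).card = V.card * 7 := by
    rw [hfib, Finset.sum_congr rfl fun v hv => by rw [hfil v hv, hA c hc_inj v]]
    rw [Finset.sum_const, smul_eq_mul]
  have hVcard : V.card = 2 ^ (4 - S.card) := by
    have hVpi : V = Fintype.piFinset
        (fun k => if c k ∈ S then ({1} : Finset (Fin 2)) else univ) := by
      ext v
      simp only [hV, mem_filter, mem_univ, true_and, Fintype.mem_piFinset]
      refine forall_congr' fun k => ?_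
      split_ifs with h
      · simp [h]
      · simp [h]
    rw [hVpi, Fintype.card_piFinset]
    have hcards : ∀ k : Fin 4,
        (if c k ∈ S then ({1} : Finset (Fin 2)) else univ).card
          = if c k ∈ S then 1 else 2 := by
      intro k; split_ifs <;> simp
    rw [Finset.prod_congr rfl fun k _ => hcards k, Finset.prod_ite, Finset.prod_const_one,
      Finset.prod_const, one_mul]
    congr 1
    have himg : (univ.filter fun k => c k ∈ S).image c = S := by
      ext i
      simp only [mem_image, mem_filter, mem_univ, true_and]
      constructor
      · rintro ⟨k, hk, rfl⟩; exact hk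
      · intro hi
        obtain ⟨k, rfl⟩ := hc_surj i (hSS' hi)
        exact ⟨k, hi, rfl⟩
    have hcardS : (univ.filter fun k => c k ∈ S).card = S.card := by
      conv_rhs => rw [← himg]
      rw [Finset.card_image_of_injective _ hc_inj]
    have hsplit : (univ.filter fun k => c k ∈ S).card
        + (univ.filter fun k => ¬ c k ∈ S).card = 4 := by
      rw [Finset.card_filter_add_card_filter_not]
      simp
    omega
  rw [h1, hcount, hVcard]
  push_cast
  ring

lemma s_eq (T : Finset (Fin 11)) :
    s A T = ∑ S ∈ T.powerset, (-2) ^ S.card * NS A S := by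
  classical
  unfold s NS
  have hrow : ∀ r : Fin 112, ∏ i ∈ T, (1 - 2 * ((A r i : ℕ) : ℤ))
      = ∑ S ∈ T.powerset, (-2) ^ S.card * ∏ i ∈ S, ((A r i : ℕ) : ℤ) := by
    intro r
    have h1 : ∏ i ∈ T, (1 - 2 * ((A r i : ℕ) : ℤ))
        = ∏ i ∈ T, ((-2) * ((A r i : ℕ) : ℤ) + 1) := by
      refine Finset.prod_congr rfl fun i _ => by ring
    rw [h1, Finset.prod_add]
    refine Finset.sum_congr rfl fun S _ => ?_
    rw [Finset.prod_const_one, mul_one, Finset.prod_mul_distrib, Finset.prod_const]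
  rw [Finset.sum_congr rfl fun r _ => hrow r, Finset.sum_comm]
  exact Finset.sum_congr rfl fun S _ => by rw [Finset.mul_sum]

lemma s_zero (hA : IsOA 4 7 A) (T : Finset (Fin 11)) (h1 : T ≠ ∅) (h4 : T.card ≤ 4) :
    s A T = 0 := by
  classical
  rw [s_eq]
  have hterm : ∀ S ∈ T.powerset, (-2 : ℤ) ^ S.card * NS A S = 112 * (-1) ^ S.card := by
    intro S hS
    have hScard : S.card ≤ 4 := le_trans (card_le_card (mem_powerset.mp hS)) h4
    rw [NS_eq A hA S hScard]
    have h2 : (2 : ℤ) ^ S.card * 2 ^ (4 - S.card) = 16 := by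
      have h4 : S.card + (4 - S.card) = 4 := by omega
      rw [← pow_add, h4]
      norm_num
    have h3 : (-2 : ℤ) ^ S.card = (-1) ^ S.card * 2 ^ S.card := by
      rw [show (-2 : ℤ) = -1 * 2 by norm_num, mul_pow]
    rw [h3]
    linear_combination (7 * (-1 : ℤ) ^ S.card) * h2
  rw [Finset.sum_congr rfl hterm, ← Finset.mul_sum,
    Finset.sum_powerset_neg_one_pow_card, if_neg h1, mul_zero]

lemma s_mod (hA : IsOA 4 7 A) (T : Finset (Fin 11)) (h5 : 5 ≤ T.card) :
    ∃ q : ℤ, s A T = 32 * q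
      + 112 * ∑ j ∈ Finset.range 5, (-1) ^ j * (T.card.choose j : ℤ) := by
  classical
  rw [s_eq]
  -- split each term according to S.card ≤ 4 or not
  have hterm : ∀ S ∈ T.powerset, (-2 : ℤ) ^ S.card * NS A S
      = (if S.card ≤ 4 then 112 * (-1) ^ S.card else 0)
        + (if S.card ≤ 4 then 0 else (-2) ^ S.card * NS A S) := by
    intro S hS
    split_ifs with h
    · rw [NS_eq A hA S h]
      have h2 : (2 : ℤ) ^ S.card * 2 ^ (4 - S.card) = 16 := by
        have h4 : S.card + (4 - S.card) = 4 := by omega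
        rw [← pow_add, h4]; norm_num
      have h3 : (-2 : ℤ) ^ S.card = (-1) ^ S.card * 2 ^ S.card := by
        rw [show (-2 : ℤ) = -1 * 2 by norm_num, mul_pow]
      rw [h3]
      linear_combination (7 * (-1 : ℤ) ^ S.card) * h2
    · ring
  rw [Finset.sum_congr rfl hterm, Finset.sum_add_distrib]
  -- second part is divisible by 32
  have hdvd : (32 : ℤ) ∣ ∑ S ∈ T.powerset, (if S.card ≤ 4 then 0 else (-2) ^ S.card * NS A S) := by
    refine Finset.dvd_sum fun S _ => ?_
    split_ifs with h
    · exact dvd_zero _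
    · push_neg at h
      have : (-2 : ℤ) ^ S.card = (-2) ^ 5 * (-2) ^ (S.card - 5) := by
        rw [← pow_add]; congr 1; omega
      rw [this]
      exact Dvd.dvd.mul_right (Dvd.dvd.mul_right ⟨-1, by norm_num⟩ _) _
  obtain ⟨q, hq⟩ := hdvd
  refine ⟨q, ?_⟩
  rw [hq]
  -- first part: group by cardinality
  have hgroup : ∑ S ∈ T.powerset, (if S.card ≤ 4 then (112 : ℤ) * (-1) ^ S.card else 0)
      = ∑ j ∈ Finset.range (T.card + 1), ∑ S ∈ Finset.powersetCard j T,
          (if j ≤ 4 then (112 : ℤ) * (-1) ^ j else 0) := by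
    rw [Finset.powerset_card_biUnion, Finset.sum_biUnion ((Finset.pairwise_disjoint_powersetCard _).set_pairwise _)]
    refine Finset.sum_congr rfl fun j _ => Finset.sum_congr rfl fun S hS => ?_
    rw [(Finset.mem_powersetCard.mp hS).2]
  rw [hgroup]
  have hconst : ∀ j ∈ Finset.range (T.card + 1),
      ∑ S ∈ Finset.powersetCard j T, (if j ≤ 4 then (112 : ℤ) * (-1) ^ j else 0)
      = (T.card.choose j : ℤ) * (if j ≤ 4 then (112 : ℤ) * (-1) ^ j else 0) := by
    intro j _
    rw [Finset.sum_const, Finset.card_powersetCard, nsmul_eq_mul]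
  rw [Finset.sum_congr rfl hconst]
  have hsplit : ∑ j ∈ Finset.range (T.card + 1),
      (T.card.choose j : ℤ) * (if j ≤ 4 then (112 : ℤ) * (-1) ^ j else 0)
      = ∑ j ∈ Finset.range 5, (T.card.choose j : ℤ) * (112 * (-1) ^ j) := by
    rw [← Finset.sum_filter_add_sum_filter_not (Finset.range (T.card + 1)) (fun j => j ≤ 4)]
    have h1 : (Finset.range (T.card + 1)).filter (fun j => j ≤ 4) = Finset.range 5 := by
      ext j
      simp only [Finset.mem_filter, Finset.mem_range]
      omega
    rw [h1]
    have h2 : ∑ j ∈ (Finset.range (T.card + 1)).filter (fun j => ¬ j ≤ 4),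
        (T.card.choose j : ℤ) * (if j ≤ 4 then (112 : ℤ) * (-1) ^ j else 0) = 0 := by
      refine Finset.sum_eq_zero fun j hj => ?_
      simp only [Finset.mem_filter] at hj
      rw [if_neg hj.2, mul_zero]
    rw [h2, add_zero]
    refine Finset.sum_congr rfl fun j hj => ?_
    rw [if_pos (by simp only [Finset.mem_range] at hj; omega : j ≤ 4)]
  rw [hsplit, Finset.mul_sum]
  ring_nf



lemma eps_eq : ∀ x y : Fin 2,
    (1 - 2 * ((x : ℕ) : ℤ)) * (1 - 2 * ((y : ℕ) : ℤ)) = if x = y then 1 else -1 := by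
  decide

lemma consec_nonneg (m : ℤ) : 0 ≤ m * (m + 1) := by
  rcases le_or_gt 0 m with h | h
  · exact mul_nonneg h (by linarith)
  · have h2 := mul_nonneg (by linarith : (0:ℤ) ≤ -m) (by linarith : (0:ℤ) ≤ -(m+1))
    nlinarith

lemma key_sq {x m : ℤ} (hm : x = 32 * m + 16) : 256 ≤ x ^ 2 := by
  have h1 := consec_nonneg m
  have h2 : x ^ 2 = 1024 * (m * (m + 1)) + 256 := by rw [hm]; ring
  linarith

lemma s_empty : s A ∅ = 112 := by
  simp [s]

lemma inner_eq (r r' : Fin 112) :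
    ∑ T ∈ (univ : Finset (Fin 11)).powerset,
      w T.card * ((∏ i ∈ T, (1 - 2 * ((A r i : ℕ) : ℤ)))
        * ∏ i ∈ T, (1 - 2 * ((A r' i : ℕ) : ℤ)))
    = P (univ.filter fun i => A r i ≠ A r' i).card := by
  classical
  set D : Finset (Fin 11) := univ.filter (fun i => A r i ≠ A r' i) with hD
  have hmemD : ∀ i : Fin 11, i ∈ D ↔ A r i ≠ A r' i := by
    intro i; simp [hD]
  have hprod : ∀ T : Finset (Fin 11),
      (∏ i ∈ T, (1 - 2 * ((A r i : ℕ) : ℤ))) * ∏ i ∈ T, (1 - 2 * ((A r' i : ℕ) : ℤ))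
      = (-1) ^ (T ∩ D).card := by
    intro T
    rw [← Finset.prod_mul_distrib]
    have h1 : ∀ i ∈ T, (1 - 2 * ((A r i : ℕ) : ℤ)) * (1 - 2 * ((A r' i : ℕ) : ℤ))
        = if i ∈ D then -1 else 1 := by
      intro i _
      rw [eps_eq]
      by_cases h : A r i = A r' i <;> simp [hmemD, h]
    rw [Finset.prod_congr rfl h1, Finset.prod_ite, Finset.prod_const,
      Finset.prod_const_one, mul_one, Finset.filter_mem_eq_inter]
  rw [Finset.sum_congr rfl fun T _ => by rw [hprod T]]
  -- bijection T ↦ (T ∩ D, T \ D)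
  have hbij : ∑ T ∈ (univ : Finset (Fin 11)).powerset, w T.card * (-1 : ℤ) ^ (T ∩ D).card
      = ∑ p ∈ D.powerset ×ˢ Dᶜ.powerset, w (p.1.card + p.2.card) * (-1 : ℤ) ^ p.1.card := by
    refine Finset.sum_bij' (i := fun T _ => (T ∩ D, T \ D))
      (j := fun p _ => p.1 ∪ p.2) ?_ ?_ ?_ ?_ ?_
    · intro T _
      simp only [Finset.mem_product, Finset.mem_powerset]
      constructor
      · exact Finset.inter_subset_right
      · intro i hi
        simp only [Finset.mem_sdiff] at hi
        simpa [Finset.mem_compl] using hi.2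
    · intro p _
      exact Finset.mem_powerset.mpr (Finset.subset_univ _)
    · intro T _
      ext i
      simp only [Finset.mem_union, Finset.mem_inter, Finset.mem_sdiff]
      tauto
    · intro p hp
      simp only [Finset.mem_product, Finset.mem_powerset] at hp
      have h2 : ∀ x ∈ p.2, x ∉ D := by
        intro x hx
        have := hp.2 hx
        simpa [Finset.mem_compl] using this
      have e1 : (p.1 ∪ p.2) ∩ D = p.1 := by
        ext i
        simp only [Finset.mem_inter, Finset.mem_union]
        constructor
        · rintro ⟨h | h, hd⟩
          · exact h
          · exact absurd hd (h2 i h)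
        · intro h; exact ⟨Or.inl h, hp.1 h⟩
      have e2 : (p.1 ∪ p.2) \ D = p.2 := by
        ext i
        simp only [Finset.mem_sdiff, Finset.mem_union]
        constructor
        · rintro ⟨h | h, hd⟩
          · exact absurd (hp.1 h) hd
          · exact h
        · intro h; exact ⟨Or.inr h, h2 i h⟩
      exact Prod.ext (by simp [e1]) (by simp [e2])
    · intro T _
      rw [Finset.card_inter_add_card_sdiff]
  rw [hbij, Finset.sum_product]
  -- group by cardinalities
  have hgrp : ∑ U ∈ D.powerset, ∑ V ∈ Dᶜ.powerset,
      w (U.card + V.card) * (-1 : ℤ) ^ U.card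
      = ∑ u ∈ Finset.range (D.card + 1), ∑ v ∈ Finset.range (Dᶜ.card + 1),
          (D.card.choose u : ℤ) * ((Dᶜ.card.choose v : ℤ) * (w (u + v) * (-1 : ℤ) ^ u)) := by
    rw [Finset.powerset_card_biUnion, Finset.sum_biUnion ((Finset.pairwise_disjoint_powersetCard _).set_pairwise _)]
    refine Finset.sum_congr rfl fun u _ => ?_
    have inner : ∀ U ∈ Finset.powersetCard u D, ∑ V ∈ Dᶜ.powerset,
        w (U.card + V.card) * (-1 : ℤ) ^ U.card
        = ∑ v ∈ Finset.range (Dᶜ.card + 1), (Dᶜ.card.choose v : ℤ) * (w (u + v) * (-1 : ℤ) ^ u) := by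
      intro U hU
      have hUcard := (Finset.mem_powersetCard.mp hU).2
      rw [Finset.powerset_card_biUnion, Finset.sum_biUnion ((Finset.pairwise_disjoint_powersetCard _).set_pairwise _)]
      refine Finset.sum_congr rfl fun v _ => ?_
      have hconst : ∀ V ∈ Finset.powersetCard v Dᶜ,
          w (U.card + V.card) * (-1 : ℤ) ^ U.card = w (u + v) * (-1 : ℤ) ^ u := by
        intro V hV
        rw [hUcard, (Finset.mem_powersetCard.mp hV).2]
      rw [Finset.sum_congr rfl hconst, Finset.sum_const, Finset.card_powersetCard,
        nsmul_eq_mul]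
    rw [Finset.sum_congr rfl inner, Finset.sum_const, Finset.card_powersetCard, nsmul_eq_mul,
      Finset.mul_sum]
  rw [hgrp]
  -- identify with P
  have hDle : D.card ≤ 11 := le_trans (Finset.card_filter_le _ _) (by simp)
  have hcompl : Dᶜ.card = 11 - D.card := by
    rw [Finset.card_compl]
    simp
  unfold P
  rw [hcompl]
  have hr : 12 - D.card = (11 - D.card) + 1 := by omega
  rw [hr]
  refine Finset.sum_congr rfl fun u _ => Finset.sum_congr rfl fun v _ => by ring

lemma Q_nonneg : 0 ≤ ∑ T ∈ (univ : Finset (Fin 11)).powerset, w T.card * (s A T) ^ 2 := by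
  classical
  have hQ : ∑ T ∈ (univ : Finset (Fin 11)).powerset, w T.card * (s A T) ^ 2
      = ∑ r : Fin 112, ∑ r' : Fin 112, ∑ T ∈ (univ : Finset (Fin 11)).powerset,
          w T.card * ((∏ i ∈ T, (1 - 2 * ((A r i : ℕ) : ℤ)))
            * ∏ i ∈ T, (1 - 2 * ((A r' i : ℕ) : ℤ))) := by
    have h1 : ∀ T ∈ (univ : Finset (Fin 11)).powerset, w T.card * (s A T) ^ 2
        = ∑ r : Fin 112, ∑ r' : Fin 112,
            w T.card * ((∏ i ∈ T, (1 - 2 * ((A r i : ℕ) : ℤ)))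
              * ∏ i ∈ T, (1 - 2 * ((A r' i : ℕ) : ℤ))) := by
      intro T _
      rw [sq]
      unfold s
      rw [Finset.sum_mul_sum, Finset.mul_sum]
      exact Finset.sum_congr rfl fun r _ => by rw [Finset.mul_sum]
    rw [Finset.sum_congr rfl h1, Finset.sum_comm]
    exact Finset.sum_congr rfl fun r _ => Finset.sum_comm
  rw [hQ]
  refine Finset.sum_nonneg fun r _ => Finset.sum_nonneg fun r' _ => ?_
  rw [inner_eq]
  exact P_nonneg _ (le_trans (Finset.card_filter_le _ _) (by simp))



def B : ℕ → ℤ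
  | 0 => 689920
  | 6 => -591360
  | 7 => -675840
  | 8 => -380160
  | _ => 0

lemma bound_mid (hA : IsOA 4 7 A) (k : ℕ) (hk : 5 ≤ k) (c : ℤ)
    (hc : 112 * ∑ j ∈ Finset.range 5, (-1 : ℤ) ^ j * (k.choose j : ℤ) = 32 * c + 16)
    (hwk : w k ≤ 0) :
    ∀ T ∈ Finset.powersetCard k (univ : Finset (Fin 11)),
      w T.card * (s A T) ^ 2 ≤ w k * 256 := by
  intro T hT
  have hcard := Finset.mem_powersetCard_univ.mp hT
  obtain ⟨q, hq⟩ := s_mod A hA T (by rw [hcard]; exact hk)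
  rw [hcard] at hq ⊢
  have h256 : 256 ≤ (s A T) ^ 2 := key_sq (m := q + c) (by rw [hq]; linarith)
  exact mul_le_mul_of_nonpos_left h256 hwk

lemma bound_neg (hA : IsOA 4 7 A) (k : ℕ) (hk : 5 ≤ k) (hwk : w k ≤ 0) :
    ∀ T ∈ Finset.powersetCard k (univ : Finset (Fin 11)),
      w T.card * (s A T) ^ 2 ≤ 0 := by
  intro T hT
  have hcard := Finset.mem_powersetCard_univ.mp hT
  rw [hcard]
  exact mul_nonpos_iff.mpr (Or.inr ⟨hwk, sq_nonneg _⟩)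

lemma Q_le (hA : IsOA 4 7 A) :
    ∑ T ∈ (univ : Finset (Fin 11)).powerset, w T.card * (s A T) ^ 2 ≤ -957440 := by
  classical
  rw [Finset.powerset_card_biUnion, Finset.sum_biUnion ((Finset.pairwise_disjoint_powersetCard _).set_pairwise _)]
  have hu : (univ : Finset (Fin 11)).card = 11 := by simp
  rw [hu]
  have hb : ∀ j ∈ Finset.range 12,
      (∑ T ∈ Finset.powersetCard j (univ : Finset (Fin 11)), w T.card * (s A T) ^ 2) ≤ B j := by
    intro j hj
    simp only [Finset.mem_range] at hj
    interval_cases j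
    · -- j = 0
      rw [Finset.powersetCard_zero, Finset.sum_singleton, Finset.card_empty, s_empty]
      norm_num [w, B]
    · -- card 1-4: s vanishes
      have h0 : ∑ T ∈ Finset.powersetCard 1 (univ : Finset (Fin 11)), w T.card * (s A T) ^ 2 = 0 := by
        refine Finset.sum_eq_zero fun T hT => ?_
        have hcard := Finset.mem_powersetCard_univ.mp hT
        rw [s_zero A hA T (fun h => by simp [h] at hcard) (hcard.le.trans (by norm_num))]
        ring
      rw [h0]
      norm_num [B]
    · -- card 1-4: s vanishes
      have h0 : ∑ T ∈ Finset.powersetCard 2 (univ : Finset (Fin 11)), w T.card * (s A T) ^ 2 = 0 := by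
        refine Finset.sum_eq_zero fun T hT => ?_
        have hcard := Finset.mem_powersetCard_univ.mp hT
        rw [s_zero A hA T (fun h => by simp [h] at hcard) (hcard.le.trans (by norm_num))]
        ring
      rw [h0]
      norm_num [B]
    · -- card 1-4: s vanishes
      have h0 : ∑ T ∈ Finset.powersetCard 3 (univ : Finset (Fin 11)), w T.card * (s A T) ^ 2 = 0 := by
        refine Finset.sum_eq_zero fun T hT => ?_
        have hcard := Finset.mem_powersetCard_univ.mp hT
        rw [s_zero A hA T (fun h => by simp [h] at hcard) (hcard.le.trans (by norm_num))]
        ring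
      rw [h0]
      norm_num [B]
    · -- card 1-4: s vanishes
      have h0 : ∑ T ∈ Finset.powersetCard 4 (univ : Finset (Fin 11)), w T.card * (s A T) ^ 2 = 0 := by
        refine Finset.sum_eq_zero fun T hT => ?_
        have hcard := Finset.mem_powersetCard_univ.mp hT
        rw [s_zero A hA T (fun h => by simp [h] at hcard) (hcard.le.trans (by norm_num))]
        ring
      rw [h0]
      norm_num [B]
    · -- w 5 = 0
      have h0 : ∑ T ∈ Finset.powersetCard 5 (univ : Finset (Fin 11)), w T.card * (s A T) ^ 2 = 0 := by
        refine Finset.sum_eq_zero fun T hT => ?_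
        rw [Finset.mem_powersetCard_univ.mp hT]
        have hw : w 5 = 0 := by decide
        rw [hw, zero_mul]
      rw [h0]
      norm_num [B]
    · -- card 6
      refine le_trans (Finset.sum_le_card_nsmul _ _ _
        (bound_mid A hA 6 (by norm_num) 17 (by decide) (by decide))) ?_
      rw [Finset.card_powersetCard, Finset.card_univ]
      simp only [Fintype.card_fin, nsmul_eq_mul]
      decide
    · -- card 7
      refine le_trans (Finset.sum_le_card_nsmul _ _ _
        (bound_mid A hA 7 (by norm_num) 52 (by decide) (by decide))) ?_
      rw [Finset.card_powersetCard, Finset.card_univ]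
      simp only [Fintype.card_fin, nsmul_eq_mul]
      decide
    · -- card 8
      refine le_trans (Finset.sum_le_card_nsmul _ _ _
        (bound_mid A hA 8 (by norm_num) 122 (by decide) (by decide))) ?_
      rw [Finset.card_powersetCard, Finset.card_univ]
      simp only [Fintype.card_fin, nsmul_eq_mul]
      decide
    · -- card 9, negative weight
      refine le_trans (Finset.sum_nonpos (bound_neg A hA 9 (by norm_num) (by decide))) ?_
      norm_num [B]
    · -- card 10, negative weight
      refine le_trans (Finset.sum_nonpos (bound_neg A hA 10 (by norm_num) (by decide))) ?_
      norm_num [B]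
    · -- w 11 = 0
      have h0 : ∑ T ∈ Finset.powersetCard 11 (univ : Finset (Fin 11)), w T.card * (s A T) ^ 2 = 0 := by
        refine Finset.sum_eq_zero fun T hT => ?_
        rw [Finset.mem_powersetCard_univ.mp hT]
        have hw : w 11 = 0 := by decide
        rw [hw, zero_mul]
      rw [h0]
      norm_num [B]
  refine le_trans (Finset.sum_le_sum hb) ?_
  decide

theorem Q_contradiction (hA : IsOA 4 7 A) : False := by
  have h1 := Q_nonneg A
  have h2 := Q_le A hA
  linarith

end NoOA

theorem no_OA_112_11 : ¬ ∃ A : Fin 112 → Fin 11 → Fin 2, IsOA 4 7 A := by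
  rintro ⟨A, hA⟩
  exact NoOA.Q_contradiction A hA
end
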